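/- Partial integrals of the quantile function. Let Y be a real random variable on a probability space (Ω, 𝒜, P) with E|Y| < ∞, cdf F(y) = P(Y ≤ y), and quantile function Q(p) = inf{y ∈ ℝ : F(y) ≥ p}. Then for every a ∈ (0,1): ∫₀^a Q(u) du = E[Y·1{Y ≤ Q(a)}] − Q(a)·(F(Q(a)) − a) and ∫_a^1 Q(u) du = E[Y·1{Y > Q(a)}] + Q(a)·(F(Q(a)) − a). In particular, if P(Y = Q(a)) = 0, then ∫₀^a Q(u) du = E[Y·1{Y ≤ Q(a)}] and ∫_a^1 Q(u) du = E[Y·1{Y > Q(a)}], with F(Q(a)) = a. -/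

import Mathlib

open MeasureTheory ProbabilityTheory Set Filter Function Topology ENNReal

noncomputable section


namespace QPI

variable {μ : MeasureTheory.Measure ℝ} [IsProbabilityMeasure μ] {F Q : ℝ → ℝ}

lemma hFcdf (hF : ∀ y, F y = (μ (Iic y)).toReal) : F = cdf μ := by
  funext y; rw [hF, cdf_eq_real, measureReal_def]

lemma galois (hF : ∀ y, F y = (μ (Iic y)).toReal)
    (hQ : ∀ p : ℝ, Q p = sInf {y : ℝ | p ≤ F y})
    {u : ℝ} (hu : u ∈ Set.Ioo (0:ℝ) 1) (y : ℝ) : Q u ≤ y ↔ u ≤ F y := by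
  have hFc := hFcdf hF
  have hmono : Monotone F := hFc ▸ (monotone_cdf μ)
  set S := {y : ℝ | u ≤ F y} with hS
  have hne : S.Nonempty := by
    have hT : Tendsto F atTop (𝓝 1) := hFc ▸ (tendsto_cdf_atTop μ)
    obtain ⟨y₁, hy₁⟩ := (hT.eventually (eventually_gt_nhds hu.2)).exists
    exact ⟨y₁, le_of_lt hy₁⟩
  have hbdd : BddBelow S := by
    have hB : Tendsto F atBot (𝓝 0) := hFc ▸ (tendsto_cdf_atBot μ)
    obtain ⟨y₀, hy₀⟩ := (hB.eventually (eventually_lt_nhds hu.1)).exists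
    refine ⟨y₀, fun z hz => ?_⟩
    by_contra hzy
    exact absurd (le_trans hz (hmono (le_of_not_ge hzy))) (not_le.2 hy₀)
  constructor
  · intro h
    have key : u ≤ F (Q u) := by
      have hev : ∀ᶠ z in 𝓝[>] (Q u), u ≤ F z := by
        refine eventually_nhdsWithin_of_forall (fun z hz => ?_)
        rw [hQ] at hz
        obtain ⟨w, hwS, hwz⟩ := exists_lt_of_csInf_lt hne hz
        exact le_trans hwS (hmono hwz.le)
      have hrc : Tendsto F (𝓝[>] (Q u)) (𝓝 (F (Q u))) := by
        have := (cdf μ).right_continuous (Q u)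
        rw [← hFc] at this
        exact this.tendsto.mono_left (nhdsWithin_mono _ Ioi_subset_Ici_self)
      exact ge_of_tendsto hrc hev
    exact le_trans key (hmono h)
  · intro h
    rw [hQ]
    exact csInf_le hbdd h

lemma lt_of_lt_quantile (hF : ∀ y, F y = (μ (Iic y)).toReal)
    (hQ : ∀ p : ℝ, Q p = sInf {y : ℝ | p ≤ F y})
    {a : ℝ} (ha : a ∈ Set.Ioo (0:ℝ) 1) {y : ℝ} (hy : y < Q a) : F y < a := by
  by_contra h
  exact absurd ((galois hF hQ ha y).2 (not_lt.1 h)) (not_le.2 hy)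

lemma le_F_quantile (hF : ∀ y, F y = (μ (Iic y)).toReal)
    (hQ : ∀ p : ℝ, Q p = sInf {y : ℝ | p ≤ F y})
    {a : ℝ} (ha : a ∈ Set.Ioo (0:ℝ) 1) : a ≤ F (Q a) :=
  (galois hF hQ ha (Q a)).1 le_rfl


lemma measurable_Q2 (hF : ∀ y, F y = (μ (Iic y)).toReal)
    (hQ : ∀ p : ℝ, Q p = sInf {y : ℝ | p ≤ F y}) :
    Measurable ((Set.Ioo (0:ℝ) 1).piecewise Q fun _ => (0:ℝ)) := by
  apply measurable_of_Iic
  intro y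
  have : ((Set.Ioo (0:ℝ) 1).piecewise Q fun _ => (0:ℝ)) ⁻¹' Iic y
      = (Set.Ioo (0:ℝ) 1 ∩ Iic (F y)) ∪ ((Set.Ioo (0:ℝ) 1)ᶜ ∩ {_u : ℝ | (0:ℝ) ≤ y}) := by
    ext u
    by_cases hu : u ∈ Set.Ioo (0:ℝ) 1
    · simp [Set.piecewise, hu, galois hF hQ hu y]
    · simp [Set.piecewise, hu]
  rw [this]
  exact (measurableSet_Ioo.inter measurableSet_Iic).union
    (measurableSet_Ioo.compl.inter (MeasurableSet.const _))

lemma toReal_integral {α : Type*} [MeasurableSpace α] {ν : MeasureTheory.Measure α} {f : α → ℝ}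
    (hm : AEMeasurable f ν) (h0 : 0 ≤ᵐ[ν] f) (hfin : ∫⁻ x, ENNReal.ofReal (f x) ∂ν ≠ ⊤) :
    Integrable f ν ∧ ∫ x, f x ∂ν = (∫⁻ x, ENNReal.ofReal (f x) ∂ν).toReal := by
  have hint : Integrable f ν := by
    refine ⟨hm.aestronglyMeasurable, ?_⟩
    rw [hasFiniteIntegral_iff_ofReal h0]
    exact lt_top_iff_ne_top.2 hfin
  exact ⟨hint, integral_eq_lintegral_of_nonneg_ae h0 hm.aestronglyMeasurable⟩

end QPI

theorem part1 {Ω : Type*} [MeasurableSpace Ω] (P : MeasureTheory.Measure Ω) [IsProbabilityMeasure P]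
    (Y : Ω → ℝ) (hYmeas : Measurable Y) (hYint : Integrable Y P)
    (F : ℝ → ℝ) (hF : ∀ y, F y = (P {ω | Y ω ≤ y}).toReal)
    (Q : ℝ → ℝ) (hQ : ∀ p : ℝ, Q p = sInf {y : ℝ | p ≤ F y})
    (a : ℝ) (ha : a ∈ Set.Ioo (0:ℝ) 1) :
    (∫ u in Set.Ioo (0:ℝ) a, Q u)
      = (∫ ω in {ω | Y ω ≤ Q a}, Y ω ∂P) - Q a * (F (Q a) - a) := by
  obtain ⟨ha0, ha1⟩ := ha
  set μ := P.map Y with hμdef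
  haveI hμP : IsProbabilityMeasure μ := Measure.isProbabilityMeasure_map hYmeas.aemeasurable
  have hmap : ∀ y : ℝ, μ (Iic y) = P {ω | Y ω ≤ y} := fun y => by
    rw [hμdef, Measure.map_apply hYmeas measurableSet_Iic]; rfl
  have hFμ : ∀ y, F y = (μ (Iic y)).toReal := fun y => by rw [hF, hmap]
  have hofReal : ∀ y, ENNReal.ofReal (F y) = μ (Iic y) := fun y => by
    rw [QPI.hFcdf hFμ]; exact ofReal_cdf μ y
  set c := Q a with hc
  have hgal : ∀ u ∈ Set.Ioo (0:ℝ) 1, ∀ y : ℝ, Q u ≤ y ↔ u ≤ F y :=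
    fun u hu y => QPI.galois hFμ hQ hu y
  have hFca : a ≤ F c := QPI.le_F_quantile hFμ hQ ⟨ha0, ha1⟩
  set Q₂ := (Set.Ioo (0:ℝ) 1).piecewise Q (fun _ => (0:ℝ)) with hQ₂def
  have hQ₂meas : Measurable Q₂ := QPI.measurable_Q2 hFμ hQ
  have hQ₂eq : ∀ u ∈ Set.Ioo (0:ℝ) 1, Q₂ u = Q u := fun u hu =>
    Set.piecewise_eq_of_mem _ _ _ hu
  set ν := volume.restrict (Set.Ioo (0:ℝ) a) with hν
  haveI : IsFiniteMeasure ν := by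
    constructor
    rw [hν, Measure.restrict_apply_univ, Real.volume_Ioo]
    exact ENNReal.ofReal_lt_top
  have hmemν : ∀ᵐ u ∂ν, u ∈ Set.Ioo (0:ℝ) a := ae_restrict_mem measurableSet_Ioo
  have hsub : Set.Ioo (0:ℝ) a ⊆ Set.Ioo (0:ℝ) 1 := Set.Ioo_subset_Ioo le_rfl ha1.le
  have hQQ₂ : ∀ᵐ u ∂ν, Q u = Q₂ u := hmemν.mono fun u hu => (hQ₂eq u (hsub hu)).symm
  have hQle : ∀ u ∈ Set.Ioo (0:ℝ) a, Q u ≤ c := fun u hu =>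
    (hgal _ (hsub hu) c).2 (le_trans hu.2.le hFca)
  have hnn : 0 ≤ᵐ[ν] fun u => c - Q₂ u := hmemν.mono fun u hu => by
    simp only [Pi.zero_apply]
    rw [hQ₂eq u (hsub hu)]
    exact sub_nonneg.2 (hQle u hu)
  have hmble : AEMeasurable (fun u => c - Q₂ u) ν := (measurable_const.sub hQ₂meas).aemeasurable
  have hL : ∫⁻ u, ENNReal.ofReal (c - Q₂ u) ∂ν
      = ∫⁻ t in Set.Ioi (0:ℝ), μ (Iic (c - t)) := by
    rw [lintegral_eq_lintegral_meas_le ν hnn hmble]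
    refine setLIntegral_congr_fun measurableSet_Ioi (fun t ht => ?_)
    have ht0 : (0:ℝ) < t := ht
    have hFlt : F (c - t) < a := QPI.lt_of_lt_quantile hFμ hQ ⟨ha0, ha1⟩ (by linarith)
    have hF0 : 0 ≤ F (c - t) := by
      rw [QPI.hFcdf hFμ]; exact cdf_nonneg μ _
    have hset : {u : ℝ | t ≤ c - Q₂ u} ∩ Set.Ioo 0 a = Set.Ioc 0 (F (c - t)) := by
      ext u
      simp only [Set.mem_inter_iff, Set.mem_setOf_eq, Set.mem_Ioo, Set.mem_Ioc]
      constructor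
      · rintro ⟨h1, h2, h3⟩
        rw [hQ₂eq u (hsub ⟨h2, h3⟩)] at h1
        exact ⟨h2, (hgal _ (hsub ⟨h2, h3⟩) _).1 (by linarith)⟩
      · rintro ⟨h1, h2⟩
        have hua : u < a := lt_of_le_of_lt h2 hFlt
        have hmem : u ∈ Set.Ioo (0:ℝ) a := ⟨h1, hua⟩
        refine ⟨?_, h1, hua⟩
        rw [hQ₂eq u (hsub hmem)]
        have := (hgal _ (hsub hmem) _).2 h2
        linarith
    rw [hν, Measure.restrict_apply' measurableSet_Ioo, hset, Real.volume_Ioc, ← hofReal,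
      sub_zero]
  have hKset : MeasurableSet {ω | Y ω ≤ c} := hYmeas measurableSet_Iic
  have hnnK : 0 ≤ᵐ[P.restrict {ω | Y ω ≤ c}] fun ω => c - Y ω :=
    (ae_restrict_mem hKset).mono fun ω hω => sub_nonneg.2 hω
  have hK : ∫⁻ ω in {ω | Y ω ≤ c}, ENNReal.ofReal (c - Y ω) ∂P
      = ∫⁻ t in Set.Ioi (0:ℝ), μ (Iic (c - t)) := by
    rw [lintegral_eq_lintegral_meas_le _ hnnK ((measurable_const.sub hYmeas).aemeasurable)]
    refine setLIntegral_congr_fun measurableSet_Ioi (fun t ht => ?_)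
    have ht0 : (0:ℝ) < t := ht
    rw [Measure.restrict_apply' hKset, hmap]
    congr 1
    ext ω
    simp only [Set.mem_inter_iff, Set.mem_setOf_eq, Set.mem_Iic]
    constructor
    · rintro ⟨h1, _⟩; linarith
    · intro h; exact ⟨by linarith, by linarith⟩
  have hfin : ∫⁻ ω in {ω | Y ω ≤ c}, ENNReal.ofReal (c - Y ω) ∂P ≠ ⊤ := by
    have hb : ∀ ω, ENNReal.ofReal (c - Y ω) ≤ ENNReal.ofReal |c| + ENNReal.ofReal |Y ω| := by
      intro ω
      rw [← ENNReal.ofReal_add (abs_nonneg _) (abs_nonneg _)]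
      refine ENNReal.ofReal_le_ofReal ?_
      rcases abs_cases c with ⟨h1, _⟩ | ⟨h1, _⟩ <;> rcases abs_cases (Y ω) with ⟨h2, _⟩ | ⟨h2, _⟩ <;>
        linarith
    refine ne_of_lt (lt_of_le_of_lt ((setLIntegral_le_lintegral _ _).trans (lintegral_mono hb)) ?_)
    rw [lintegral_add_left measurable_const]
    refine ENNReal.add_lt_top.2 ⟨?_, ?_⟩
    · rw [lintegral_const, measure_univ, mul_one]; exact ENNReal.ofReal_lt_top
    · have : ∀ ω, ENNReal.ofReal |Y ω| = (‖Y ω‖₊ : ℝ≥0∞) := fun ω => by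
        rw [← Real.norm_eq_abs, ofReal_norm, enorm_eq_nnnorm]
      simp_rw [this]
      exact hYint.2
  have hLfin : ∫⁻ u, ENNReal.ofReal (c - Q₂ u) ∂ν ≠ ⊤ := by rw [hL, ← hK]; exact hfin
  obtain ⟨hintL, hvalL⟩ := QPI.toReal_integral hmble hnn hLfin
  obtain ⟨hintK, hvalK⟩ := QPI.toReal_integral
    (f := fun ω => c - Y ω) ((measurable_const.sub hYmeas).aemeasurable) hnnK hfin
  have hQ₂int : Integrable Q₂ ν := by
    have h := (integrable_const c).sub hintL
    simpa [Pi.sub_def, _root_.sub_sub_cancel] using h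
  have hiL : ∫ u, (c - Q₂ u) ∂ν = c * a - ∫ u, Q₂ u ∂ν := by
    rw [integral_sub (integrable_const c) hQ₂int, integral_const]
    have hν1 : (ν Set.univ).toReal = a := by
      rw [hν, Measure.restrict_apply_univ, Real.volume_Ioo, sub_zero,
        ENNReal.toReal_ofReal ha0.le]
    rw [measureReal_def, hν1, smul_eq_mul, mul_comm]
  have hiK : ∫ ω in {ω | Y ω ≤ c}, (c - Y ω) ∂P
      = c * F c - ∫ ω in {ω | Y ω ≤ c}, Y ω ∂P := by
    rw [integral_sub (integrable_const c) hYint.restrict, integral_const,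
      measureReal_restrict_apply_univ, measureReal_def, hF c, smul_eq_mul, mul_comm]
  have h1 : ∫ u, Q u ∂ν = ∫ u, Q₂ u ∂ν := integral_congr_ae hQQ₂
  have hLK : c * a - ∫ u, Q₂ u ∂ν = c * F c - ∫ ω in {ω | Y ω ≤ c}, Y ω ∂P := by
    rw [← hiL, ← hiK, hvalL, hvalK, hL, hK]
  rw [show (∫ u in Set.Ioo (0:ℝ) a, Q u) = ∫ u, Q u ∂ν from rfl, h1]
  linear_combination -hLK

theorem part2 {Ω : Type*} [MeasurableSpace Ω] (P : MeasureTheory.Measure Ω) [IsProbabilityMeasure P]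
    (Y : Ω → ℝ) (hYmeas : Measurable Y) (hYint : Integrable Y P)
    (F : ℝ → ℝ) (hF : ∀ y, F y = (P {ω | Y ω ≤ y}).toReal)
    (Q : ℝ → ℝ) (hQ : ∀ p : ℝ, Q p = sInf {y : ℝ | p ≤ F y})
    (a : ℝ) (ha : a ∈ Set.Ioo (0:ℝ) 1) :
    (∫ u in Set.Ioo a (1:ℝ), Q u)
      = (∫ ω in {ω | Q a < Y ω}, Y ω ∂P) + Q a * (F (Q a) - a) := by
  obtain ⟨ha0, ha1⟩ := ha
  set μ := P.map Y with hμdef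
  haveI hμP : IsProbabilityMeasure μ := Measure.isProbabilityMeasure_map hYmeas.aemeasurable
  have hmap : ∀ y : ℝ, μ (Iic y) = P {ω | Y ω ≤ y} := fun y => by
    rw [hμdef, Measure.map_apply hYmeas measurableSet_Iic]; rfl
  have hFμ : ∀ y, F y = (μ (Iic y)).toReal := fun y => by rw [hF, hmap]
  have hofReal : ∀ y, ENNReal.ofReal (F y) = μ (Iic y) := fun y => by
    rw [QPI.hFcdf hFμ]; exact ofReal_cdf μ y
  have hFmono : Monotone F := by rw [QPI.hFcdf hFμ]; exact monotone_cdf μ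
  set c := Q a with hc
  have hgal : ∀ u ∈ Set.Ioo (0:ℝ) 1, ∀ y : ℝ, Q u ≤ y ↔ u ≤ F y :=
    fun u hu y => QPI.galois hFμ hQ hu y
  have hFca : a ≤ F c := QPI.le_F_quantile hFμ hQ ⟨ha0, ha1⟩
  set Q₂ := (Set.Ioo (0:ℝ) 1).piecewise Q (fun _ => (0:ℝ)) with hQ₂def
  have hQ₂meas : Measurable Q₂ := QPI.measurable_Q2 hFμ hQ
  have hQ₂eq : ∀ u ∈ Set.Ioo (0:ℝ) 1, Q₂ u = Q u := fun u hu =>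
    Set.piecewise_eq_of_mem _ _ _ hu
  set ν := volume.restrict (Set.Ioo a (1:ℝ)) with hν
  haveI : IsFiniteMeasure ν := by
    constructor
    rw [hν, Measure.restrict_apply_univ, Real.volume_Ioo]
    exact ENNReal.ofReal_lt_top
  have hmemν : ∀ᵐ u ∂ν, u ∈ Set.Ioo a (1:ℝ) := ae_restrict_mem measurableSet_Ioo
  have hsub : Set.Ioo a (1:ℝ) ⊆ Set.Ioo (0:ℝ) 1 := Set.Ioo_subset_Ioo ha0.le le_rfl
  have hQQ₂ : ∀ᵐ u ∂ν, Q u = Q₂ u := hmemν.mono fun u hu => (hQ₂eq u (hsub hu)).symm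
  have hQge : ∀ u ∈ Set.Ioo a (1:ℝ), c ≤ Q u := by
    intro u hu
    by_contra hlt
    have h1 : F (Q u) < a := QPI.lt_of_lt_quantile hFμ hQ ⟨ha0, ha1⟩ (not_le.1 hlt)
    have h2 : u ≤ F (Q u) := (hgal u (hsub hu) (Q u)).1 le_rfl
    linarith [hu.1]
  have hnn : 0 ≤ᵐ[ν] fun u => Q₂ u - c := hmemν.mono fun u hu => by
    simp only [Pi.zero_apply]
    rw [hQ₂eq u (hsub hu)]
    exact sub_nonneg.2 (hQge u hu)
  have hmble : AEMeasurable (fun u => Q₂ u - c) ν := (hQ₂meas.sub measurable_const).aemeasurable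
  have hL : ∫⁻ u, ENNReal.ofReal (Q₂ u - c) ∂ν
      = ∫⁻ t in Set.Ioi (0:ℝ), (1 - μ (Iic (c + t))) := by
    rw [lintegral_eq_lintegral_meas_lt ν hnn hmble]
    refine setLIntegral_congr_fun measurableSet_Ioi (fun t ht => ?_)
    have ht0 : (0:ℝ) < t := ht
    have hFct : a ≤ F (c + t) := le_trans hFca (hFmono (by linarith))
    have hF1 : F (c + t) ≤ 1 := by
      rw [QPI.hFcdf hFμ]; exact cdf_le_one μ _
    have hset : {u : ℝ | t < Q₂ u - c} ∩ Set.Ioo a 1 = Set.Ioo (F (c + t)) 1 := by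
      ext u
      simp only [Set.mem_inter_iff, Set.mem_setOf_eq, Set.mem_Ioo]
      constructor
      · rintro ⟨h1, h2, h3⟩
        rw [hQ₂eq u (hsub ⟨h2, h3⟩)] at h1
        refine ⟨?_, h3⟩
        by_contra hle
        have := (hgal u (hsub ⟨h2, h3⟩) (c + t)).2 (not_lt.1 hle)
        linarith
      · rintro ⟨h1, h2⟩
        have hmem : u ∈ Set.Ioo a (1:ℝ) := ⟨lt_of_le_of_lt hFct h1, h2⟩
        refine ⟨?_, hmem.1, h2⟩
        rw [hQ₂eq u (hsub hmem)]
        have : ¬ Q u ≤ c + t := fun hle => absurd ((hgal u (hsub hmem) (c + t)).1 hle)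
          (not_le.2 h1)
        linarith [not_le.1 this]
    have hF0' : 0 ≤ F (c + t) := by rw [QPI.hFcdf hFμ]; exact cdf_nonneg μ _
    rw [hν, Measure.restrict_apply' measurableSet_Ioo, hset, Real.volume_Ioo, ← hofReal,
      ENNReal.ofReal_sub _ hF0', ENNReal.ofReal_one]
  have hKset : MeasurableSet {ω | c < Y ω} := hYmeas measurableSet_Ioi
  have hnnK : 0 ≤ᵐ[P.restrict {ω | c < Y ω}] fun ω => Y ω - c :=
    (ae_restrict_mem hKset).mono fun ω hω => sub_nonneg.2 (le_of_lt hω)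
  have hK : ∫⁻ ω in {ω | c < Y ω}, ENNReal.ofReal (Y ω - c) ∂P
      = ∫⁻ t in Set.Ioi (0:ℝ), (1 - μ (Iic (c + t))) := by
    rw [lintegral_eq_lintegral_meas_lt _ hnnK ((hYmeas.sub measurable_const).aemeasurable)]
    refine setLIntegral_congr_fun measurableSet_Ioi (fun t ht => ?_)
    have ht0 : (0:ℝ) < t := ht
    rw [Measure.restrict_apply' hKset]
    have hseteq : {ω | t < Y ω - c} ∩ {ω | c < Y ω} = {ω | Y ω ≤ c + t}ᶜ := by
      ext ω
      simp only [Set.mem_inter_iff, Set.mem_setOf_eq, Set.mem_compl_iff, not_le]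
      constructor
      · rintro ⟨h1, _⟩; linarith
      · intro h; exact ⟨by linarith, by linarith⟩
    have hs : MeasurableSet {ω | Y ω ≤ c + t} := hYmeas measurableSet_Iic
    rw [hseteq, measure_compl hs (measure_ne_top P _), measure_univ, hmap]
  have hfin : ∫⁻ ω in {ω | c < Y ω}, ENNReal.ofReal (Y ω - c) ∂P ≠ ⊤ := by
    have hb : ∀ ω, ENNReal.ofReal (Y ω - c) ≤ ENNReal.ofReal |c| + ENNReal.ofReal |Y ω| := by
      intro ω
      rw [← ENNReal.ofReal_add (abs_nonneg _) (abs_nonneg _)]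
      refine ENNReal.ofReal_le_ofReal ?_
      rcases abs_cases c with ⟨h1, _⟩ | ⟨h1, _⟩ <;> rcases abs_cases (Y ω) with ⟨h2, _⟩ | ⟨h2, _⟩ <;>
        linarith
    refine ne_of_lt (lt_of_le_of_lt ((setLIntegral_le_lintegral _ _).trans (lintegral_mono hb)) ?_)
    rw [lintegral_add_left measurable_const]
    refine ENNReal.add_lt_top.2 ⟨?_, ?_⟩
    · rw [lintegral_const, measure_univ, mul_one]; exact ENNReal.ofReal_lt_top
    · have : ∀ ω, ENNReal.ofReal |Y ω| = (‖Y ω‖₊ : ℝ≥0∞) := fun ω => by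
        rw [← Real.norm_eq_abs, ofReal_norm, enorm_eq_nnnorm]
      simp_rw [this]
      exact hYint.2
  have hLfin : ∫⁻ u, ENNReal.ofReal (Q₂ u - c) ∂ν ≠ ⊤ := by rw [hL, ← hK]; exact hfin
  obtain ⟨hintL, hvalL⟩ := QPI.toReal_integral hmble hnn hLfin
  obtain ⟨hintK, hvalK⟩ := QPI.toReal_integral
    (f := fun ω => Y ω - c) ((hYmeas.sub measurable_const).aemeasurable) hnnK hfin
  have hQ₂int : Integrable Q₂ ν := by
    have h := hintL.add (integrable_const c)
    simpa [Pi.add_def, sub_add_cancel] using h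
  have hiL : ∫ u, (Q₂ u - c) ∂ν = (∫ u, Q₂ u ∂ν) - c * (1 - a) := by
    rw [integral_sub hQ₂int (integrable_const c), integral_const]
    have hν1 : (ν Set.univ).toReal = 1 - a := by
      rw [hν, Measure.restrict_apply_univ, Real.volume_Ioo,
        ENNReal.toReal_ofReal (by linarith)]
    rw [measureReal_def, hν1, smul_eq_mul, mul_comm]
  have hPgt : (P {ω | c < Y ω}).toReal = 1 - F c := by
    have hcompl : {ω | c < Y ω} = {ω | Y ω ≤ c}ᶜ := by
      ext ω; simp [not_le]
    have hs : MeasurableSet {ω | Y ω ≤ c} := hYmeas measurableSet_Iic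
    rw [hcompl, measure_compl hs (measure_ne_top P _), measure_univ]
    rw [ENNReal.toReal_sub_of_le (prob_le_one) ENNReal.one_ne_top, ENNReal.toReal_one, hF c]
  have hiK : ∫ ω in {ω | c < Y ω}, (Y ω - c) ∂P
      = (∫ ω in {ω | c < Y ω}, Y ω ∂P) - c * (1 - F c) := by
    rw [integral_sub hYint.restrict (integrable_const c), integral_const,
      measureReal_restrict_apply_univ, measureReal_def, hPgt, smul_eq_mul, mul_comm]
  have h1 : ∫ u, Q u ∂ν = ∫ u, Q₂ u ∂ν := integral_congr_ae hQQ₂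
  have hLK : (∫ u, Q₂ u ∂ν) - c * (1 - a)
      = (∫ ω in {ω | c < Y ω}, Y ω ∂P) - c * (1 - F c) := by
    rw [← hiL, ← hiK, hvalL, hvalK, hL, hK]
  rw [show (∫ u in Set.Ioo a (1:ℝ), Q u) = ∫ u, Q u ∂ν from rfl, h1]
  linear_combination hLK

theorem part3 {Ω : Type*} [MeasurableSpace Ω] (P : MeasureTheory.Measure Ω) [IsProbabilityMeasure P]
    (Y : Ω → ℝ) (hYmeas : Measurable Y)
    (F : ℝ → ℝ) (hF : ∀ y, F y = (P {ω | Y ω ≤ y}).toReal)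
    (Q : ℝ → ℝ) (hQ : ∀ p : ℝ, Q p = sInf {y : ℝ | p ≤ F y})
    (a : ℝ) (ha : a ∈ Set.Ioo (0:ℝ) 1) (h0 : P {ω | Y ω = Q a} = 0) :
    F (Q a) = a := by
  obtain ⟨ha0, ha1⟩ := ha
  set μ := P.map Y with hμdef
  haveI hμP : IsProbabilityMeasure μ := Measure.isProbabilityMeasure_map hYmeas.aemeasurable
  have hmap : ∀ y : ℝ, μ (Iic y) = P {ω | Y ω ≤ y} := fun y => by
    rw [hμdef, Measure.map_apply hYmeas measurableSet_Iic]; rfl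
  have hFμ : ∀ y, F y = (μ (Iic y)).toReal := fun y => by rw [hF, hmap]
  have hofReal : ∀ y, ENNReal.ofReal (F y) = μ (Iic y) := fun y => by
    rw [QPI.hFcdf hFμ]; exact ofReal_cdf μ y
  set c := Q a with hc
  have hFca : a ≤ F c := QPI.le_F_quantile hFμ hQ ⟨ha0, ha1⟩
  have hsing : μ {c} = 0 := by
    rw [hμdef, Measure.map_apply hYmeas (measurableSet_singleton c)]
    rw [show Y ⁻¹' {c} = {ω | Y ω = c} from rfl]
    exact h0
  have hIic : μ (Iic c) = μ (Iio c) := by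
    refine le_antisymm ?_ (measure_mono Set.Iio_subset_Iic_self)
    calc μ (Iic c) = μ (Iio c ∪ {c}) := by rw [Set.Iio_union_right]
      _ ≤ μ (Iio c) + μ {c} := measure_union_le _ _
      _ = μ (Iio c) := by rw [hsing, add_zero]
  have hUeq : Iio c = ⋃ n : ℕ, Iic (c - 1 / ((n : ℝ) + 1)) := by
    ext x
    simp only [Set.mem_Iio, Set.mem_iUnion, Set.mem_Iic]
    constructor
    · intro hx
      obtain ⟨n, hn⟩ := exists_nat_one_div_lt (sub_pos.2 hx)
      exact ⟨n, by linarith⟩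
    · rintro ⟨n, hn⟩
      have hpos : 0 < 1 / ((n : ℝ) + 1) := by positivity
      linarith
  have hle : μ (Iio c) ≤ ENNReal.ofReal a := by
    rw [hUeq]
    have hmono : Monotone fun n : ℕ => Iic (c - 1 / ((n : ℝ) + 1)) := by
      intro m n hmn
      refine Set.Iic_subset_Iic.2 (by
        have : 1 / ((n : ℝ) + 1) ≤ 1 / ((m : ℝ) + 1) := by
          apply one_div_le_one_div_of_le (by positivity)
          exact_mod_cast add_le_add_left (Nat.cast_le.2 hmn) 1
        linarith)
    rw [hmono.directed_le.measure_iUnion]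
    refine iSup_le fun n => ?_
    rw [← hofReal]
    refine ENNReal.ofReal_le_ofReal ?_
    have hlt : c - 1 / ((n : ℝ) + 1) < c := by
      have : 0 < 1 / ((n : ℝ) + 1) := by positivity
      linarith
    exact (QPI.lt_of_lt_quantile hFμ hQ ⟨ha0, ha1⟩ hlt).le
  have hFle : F c ≤ a := by
    rw [hFμ, hIic]
    calc (μ (Iio c)).toReal ≤ (ENNReal.ofReal a).toReal :=
          ENNReal.toReal_mono ENNReal.ofReal_ne_top hle
      _ = a := ENNReal.toReal_ofReal ha0.le
  exact le_antisymm hFle hFca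


/-- **Partial integrals of the quantile function.**
Let `Y` be an integrable real random variable with cdf `F` and quantile function `Q`. For
every `a ∈ (0,1)`:
`∫₀ᵃ Q(u) du = E[Y·1{Y ≤ Q(a)}] − Q(a)·(F(Q(a)) − a)` and
`∫ₐ¹ Q(u) du = E[Y·1{Y > Q(a)}] + Q(a)·(F(Q(a)) − a)`.
If `P(Y = Q(a)) = 0`, then `F(Q(a)) = a` and the correction terms vanish. -/
theorem quantile_partial_integrals
    {Ω : Type*} [MeasurableSpace Ω] (P : Measure Ω) [IsProbabilityMeasure P]
    (Y : Ω → ℝ) (hYmeas : Measurable Y) (hYint : Integrable Y P)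
    (F : ℝ → ℝ) (hF : ∀ y, F y = (P {ω | Y ω ≤ y}).toReal)
    (Q : ℝ → ℝ) (hQ : ∀ p : ℝ, Q p = sInf {y : ℝ | p ≤ F y})
    (a : ℝ) (ha : a ∈ Set.Ioo (0:ℝ) 1) :
    (∫ u in Set.Ioo (0:ℝ) a, Q u)
      = (∫ ω in {ω | Y ω ≤ Q a}, Y ω ∂P) - Q a * (F (Q a) - a) ∧
    (∫ u in Set.Ioo a (1:ℝ), Q u)
      = (∫ ω in {ω | Q a < Y ω}, Y ω ∂P) + Q a * (F (Q a) - a) ∧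
    (P {ω | Y ω = Q a} = 0 →
      F (Q a) = a ∧
      (∫ u in Set.Ioo (0:ℝ) a, Q u) = (∫ ω in {ω | Y ω ≤ Q a}, Y ω ∂P) ∧
      (∫ u in Set.Ioo a (1:ℝ), Q u) = (∫ ω in {ω | Q a < Y ω}, Y ω ∂P)) := by
  refine ⟨part1 P Y hYmeas hYint F hF Q hQ a ha, part2 P Y hYmeas hYint F hF Q hQ a ha,
    fun h0 => ?_⟩
  have hFeq := part3 P Y hYmeas F hF Q hQ a ha h0
  refine ⟨hFeq, ?_, ?_⟩
  · rw [part1 P Y hYmeas hYint F hF Q hQ a ha, hFeq, sub_self, mul_zero, sub_zero]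
  · rw [part2 P Y hYmeas hYint F hF Q hQ a ha, hFeq, sub_self, mul_zero, add_zero]

end
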